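/- Affine covariance of the affine Gaussian scale space: if f_L(ξ) = f_R(Aξ + b) for an invertible 2×2 matrix A and vector b, and L(·;Σ) = g(·;Σ) * f_L, R(·;Σ) = g(·;Σ) * f_R, then L(x; Σ_L) = R(Ax + b; A Σ_L Aᵀ) for every symmetric positive definite Σ_L. -/

import Mathlib

open Real Matrix MeasureTheory

/-- The two-dimensional affine Gaussian kernel with covariance matrix `S`. -/
noncomputable def affGaussKernel (S : Matrix (Fin 2) (Fin 2) ℝ) (x : Fin 2 → ℝ) : ℝ :=
  (1 / (2 * π * Real.sqrt S.det)) * Real.exp (- (x ⬝ᵥ S⁻¹.mulVec x) / 2)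

lemma affGaussKernel_continuous (S : Matrix (Fin 2) (Fin 2) ℝ) :
    Continuous (affGaussKernel S) := by
  unfold affGaussKernel
  have h : Continuous (fun x : Fin 2 → ℝ => x ⬝ᵥ S⁻¹.mulVec x) := by
    simp only [dotProduct, Matrix.mulVec]
    fun_prop
  exact continuous_const.mul (Real.continuous_exp.comp (by fun_prop))

lemma affGaussKernel_affine (A SL : Matrix (Fin 2) (Fin 2) ℝ) (hA : IsUnit A.det)
    (hpos : SL.PosDef) (v : Fin 2 → ℝ) :
    affGaussKernel SL v = |A.det| * affGaussKernel (A * SL * Aᵀ) (A.mulVec v) := by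
  have hdA : A.det ≠ 0 := hA.ne_zero
  have hdS : 0 < SL.det := hpos.det_pos
  have hdet : (A * SL * Aᵀ).det = A.det ^ 2 * SL.det := by
    rw [Matrix.det_mul, Matrix.det_mul, Matrix.det_transpose]; ring
  have hsqrt : Real.sqrt ((A * SL * Aᵀ).det) = |A.det| * Real.sqrt SL.det := by
    rw [hdet, Real.sqrt_mul (sq_nonneg _), Real.sqrt_sq_eq_abs]
  have h1 : A⁻¹.mulVec (A.mulVec v) = v := by
    rw [Matrix.mulVec_mulVec, Matrix.nonsing_inv_mul _ hA, Matrix.one_mulVec]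
  have hform : A.mulVec v ⬝ᵥ (A * SL * Aᵀ)⁻¹.mulVec (A.mulVec v) = v ⬝ᵥ SL⁻¹.mulVec v := by
    rw [Matrix.mul_inv_rev, Matrix.mul_inv_rev, ← Matrix.transpose_nonsing_inv,
      ← Matrix.mulVec_mulVec, ← Matrix.mulVec_mulVec,
      Matrix.dotProduct_mulVec, Matrix.vecMul_transpose, h1]
  unfold affGaussKernel
  rw [hsqrt, hform]
  have h2 : Real.sqrt SL.det ≠ 0 := ne_of_gt (Real.sqrt_pos.2 hdS)
  have h3 : |A.det| ≠ 0 := abs_ne_zero.2 hdA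
  have h4 : (π : ℝ) ≠ 0 := Real.pi_ne_zero
  field_simp

/-- Affine covariance of the affine Gaussian scale space: if
`f_L ξ = f_R (A ξ + b)` for an invertible `A`, and `L(·; Σ) = g(·; Σ) * f_L`,
`R(·; Σ) = g(·; Σ) * f_R` are the corresponding scale-space representations,
then `L(x; Σ_L) = R(A x + b; A Σ_L Aᵀ)` for every symmetric positive
definite `Σ_L`. -/
theorem affGauss_scale_space_affine_covariance
    (A : Matrix (Fin 2) (Fin 2) ℝ) (b : Fin 2 → ℝ) (hA : IsUnit A.det)
    (fL fR : (Fin 2 → ℝ) → ℝ) (hfR : Integrable fR)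
    (hrel : ∀ ξ : Fin 2 → ℝ, fL ξ = fR (A.mulVec ξ + b))
    (SL : Matrix (Fin 2) (Fin 2) ℝ) (hsymm : SL.IsSymm) (hpos : SL.PosDef) :
    ∀ x : Fin 2 → ℝ,
      ∫ ξ : Fin 2 → ℝ, affGaussKernel SL (x - ξ) * fL ξ =
        ∫ η : Fin 2 → ℝ,
          affGaussKernel (A * SL * Aᵀ) (A.mulVec x + b - η) * fR η := by
  intro x
  have hdA : A.det ≠ 0 := hA.ne_zero
  set S2 := A * SL * Aᵀ with hS2
  set F : (Fin 2 → ℝ) → ℝ := fun η => affGaussKernel S2 (A.mulVec x + b - η) * fR η with hF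
  set T : (Fin 2 → ℝ) → (Fin 2 → ℝ) := fun ξ => A.mulVec ξ + b with hT
  -- measurability of F
  have hFm : AEStronglyMeasurable F volume := by
    exact (((affGaussKernel_continuous S2).comp
      (continuous_const.sub continuous_id)).aestronglyMeasurable).mul hfR.1
  -- the pushforward of volume under T
  have hTc : T = (fun y => y + b) ∘ (Matrix.toLin' A) := by
    funext ξ; simp [hT, Matrix.toLin'_apply]
  have hTmeas : Measurable T := by
    rw [hTc]
    exact ((continuous_id.add continuous_const).comp
      (Matrix.toLin' A : (Fin 2 → ℝ) →ₗ[ℝ] (Fin 2 → ℝ)).continuous_of_finiteDimensional).measurable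
  have hmap : Measure.map T volume = ENNReal.ofReal |A.det⁻¹| • volume := by
    have hlin : Measure.map (Matrix.toLin' A) (volume : Measure (Fin 2 → ℝ)) =
        ENNReal.ofReal |(A.det)⁻¹| • volume := by
      have := Measure.map_linearMap_addHaar_eq_smul_addHaar
        (μ := (volume : Measure (Fin 2 → ℝ))) (f := Matrix.toLin' A)
        (by rw [LinearMap.det_toLin']; exact hdA)
      rwa [LinearMap.det_toLin'] at this
    rw [hTc, ← Measure.map_map (measurable_add_const b)
      (Matrix.toLin' A : (Fin 2 → ℝ) →ₗ[ℝ] (Fin 2 → ℝ)).continuous_of_finiteDimensional.measurable,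
      hlin, Measure.map_smul, MeasureTheory.map_add_right_eq_self]
  -- change of variables
  have hcov : ∫ η, F η = |A.det| * ∫ ξ, F (T ξ) := by
    have h1 : ∫ ξ, F (T ξ) = ∫ η, F η ∂(Measure.map T volume) := by
      rw [integral_map hTmeas.aemeasurable]
      rw [hmap]
      exact hFm.smul_measure _
    rw [h1, hmap, integral_smul_measure, ENNReal.toReal_ofReal (abs_nonneg _)]
    rw [abs_inv]
    rw [smul_eq_mul, ← mul_assoc, mul_inv_cancel₀ (abs_ne_zero.2 hdA), one_mul]
  -- rewrite the left-hand side
  have hLHS : ∀ ξ, affGaussKernel SL (x - ξ) * fL ξ = |A.det| * F (T ξ) := by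
    intro ξ
    have hv : A.mulVec (x - ξ) = A.mulVec x + b - T ξ := by
      simp only [hT, Matrix.mulVec_sub]
      abel
    rw [hrel, affGaussKernel_affine A SL hA hpos (x - ξ), hv]
    simp [hF, hT]
    ring
  simp_rw [hLHS]
  rw [integral_const_mul, hcov]
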